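/- Let L be a bounded lattice equipped with a map x ↦ xᶜ that is involutive, antitone, and satisfies x ⊓ xᶜ = ⊥, and with a binary operation △ satisfying (GEQL1) associativity, (GEQL2) x △ ⊤ = xᶜ = ⊤ △ x, and (GEQL3) x ≤ z and y ≤ z imply x △ y ≤ z. Then for all y, z ∈ L with z ≤ y and y ⊓ zᶜ = ⊥ one has y △ z = ⊥, and consequently z = y. -/
import Mathlib


/-- In a bounded lattice with an orthocomplementation `oc` (involutive,
antitone, `x ⊓ oc x = ⊥`) and a symmetric-difference operation `sd` satisfying
(GEQL1)–(GEQL3): if `z ≤ y` and `y ⊓ oc z = ⊥`, then `y ∆ z = ⊥` and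
consequently `z = y`. -/
theorem stmt19 {L : Type*} [Lattice L] [BoundedOrder L]
    (oc : L → L) (sd : L → L → L)
    (h_inv : ∀ x : L, oc (oc x) = x)
    (h_anti : ∀ x y : L, x ≤ y → oc y ≤ oc x)
    (h_compl : ∀ x : L, x ⊓ oc x = ⊥)
    (hGEQL1 : ∀ x y z : L, sd x (sd y z) = sd (sd x y) z)
    (hGEQL2 : ∀ x : L, sd x ⊤ = oc x ∧ sd ⊤ x = oc x)
    (hGEQL3 : ∀ x y z : L, x ≤ z → y ≤ z → sd x y ≤ z) :
    ∀ y z : L, z ≤ y → y ⊓ oc z = ⊥ → sd y z = ⊥ ∧ z = y := by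
  have hoctop : oc ⊤ = ⊥ := by
    have := h_compl ⊤; rwa [top_inf_eq] at this
  -- key rewriting: sd a b = sd (oc a) (oc b)
  have hdual : ∀ a b : L, sd a b = sd (oc a) (oc b) := by
    intro a b
    conv_lhs => rw [← h_inv b, ← (hGEQL2 (oc b)).2, hGEQL1, (hGEQL2 a).1]
  -- sd x x = ⊥
  have hself : ∀ x : L, sd x x = ⊥ := by
    intro x
    have h1 : sd x x ≤ x := hGEQL3 x x x le_rfl le_rfl
    have h2 : sd x x ≤ oc x := by
      rw [hdual]; exact hGEQL3 _ _ _ le_rfl le_rfl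
    have := le_inf h1 h2
    rw [h_compl] at this
    exact le_bot_iff.mp this
  -- sd y ⊥ = y
  have hbot : ∀ x : L, sd x ⊥ = x := by
    intro x
    rw [← hoctop, ← (hGEQL2 ⊤).1, hGEQL1, (hGEQL2 x).1, (hGEQL2 (oc x)).1, h_inv]
  intro y z hzy hmeet
  have h1 : sd y z ≤ y := hGEQL3 y z y le_rfl hzy
  have h2 : sd y z ≤ oc z := by
    rw [hdual]; exact hGEQL3 _ _ _ (h_anti z y hzy) le_rfl
  have hsd : sd y z = ⊥ := by
    have := le_inf h1 h2
    rw [hmeet] at this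
    exact le_bot_iff.mp this
  refine ⟨hsd, ?_⟩
  have : sd y (sd z z) = sd (sd y z) z := hGEQL1 y z z
  rw [hself, hsd, hbot] at this
  -- this : y = sd ⊥ z
  have hbotl : sd ⊥ z = z := by
    rw [hdual, ← hoctop, h_inv, (hGEQL2 (oc z)).2, h_inv]
  rw [hbotl] at this
  exact this.symm
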